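/- arXiv:1302.4900 — 3 statements merged into one kernel-verified Lean document; each statement's English description precedes it below -/
import Mathlib

section
/- For any group G, the lattice of subgroups of G is distributive (i.e. H ⊓ (K ⊔ L) = (H ⊓ K) ⊔ (H ⊓ L) for all subgroups H, K, L of G) if and only if G is commutative and locally cyclic, i.e. for every finite subset S of G the subgroup generated by S is cyclic. -/
open Subgroup

section GroupPart

variable {G : Type*} [Group G]

theorem ore_dual (hdist : ∀ H K L : Subgroup G, H ⊓ (K ⊔ L) = (H ⊓ K) ⊔ (H ⊓ L))
    (H K L : Subgroup G) : H ⊔ (K ⊓ L) = (H ⊔ K) ⊓ (H ⊔ L) := by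
  conv_rhs => rw [hdist]
  rw [inf_eq_right.mpr (le_sup_left : H ≤ H ⊔ K), inf_comm (H ⊔ K) L, hdist, ← sup_assoc,
    sup_eq_left.mpr (inf_le_right : L ⊓ H ≤ H), inf_comm L K]

theorem ore_comm (hdist : ∀ H K L : Subgroup G, H ⊓ (K ⊔ L) = (H ⊓ K) ⊔ (H ⊓ L))
    (a b : G) : a * b = b * a := by
  set c := a * b with hc
  have h1 : zpowers c ⊔ zpowers a = zpowers a ⊔ zpowers b := by
    apply le_antisymm
    · refine sup_le (zpowers_le.mpr ?_) (zpowers_le.mpr ?_)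
      · exact mul_mem (le_sup_left (a := zpowers a) (b := zpowers b) (mem_zpowers a))
          (le_sup_right (a := zpowers a) (b := zpowers b) (mem_zpowers b))
      · exact le_sup_left (a := zpowers a) (b := zpowers b) (mem_zpowers a)
    · refine sup_le (zpowers_le.mpr ?_) (zpowers_le.mpr ?_)
      · exact le_sup_right (a := zpowers c) (b := zpowers a) (mem_zpowers a)
      · have : b = a⁻¹ * c := by rw [hc]; group
        rw [this]
        exact mul_mem (inv_mem (le_sup_right (a := zpowers c) (mem_zpowers a)))
          (le_sup_left (b := zpowers a) (mem_zpowers c))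
  have h2 : zpowers c ⊔ zpowers b = zpowers a ⊔ zpowers b := by
    apply le_antisymm
    · refine sup_le (zpowers_le.mpr ?_) (zpowers_le.mpr ?_)
      · exact mul_mem (le_sup_left (b := zpowers b) (mem_zpowers a))
          (le_sup_right (a := zpowers a) (mem_zpowers b))
      · exact le_sup_right (a := zpowers a) (mem_zpowers b)
    · refine sup_le (zpowers_le.mpr ?_) (zpowers_le.mpr ?_)
      · have : a = c * b⁻¹ := by rw [hc]; group
        rw [this]
        exact mul_mem (le_sup_left (b := zpowers b) (mem_zpowers c))
          (inv_mem (le_sup_right (a := zpowers c) (mem_zpowers b)))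
      · exact le_sup_right (a := zpowers c) (mem_zpowers b)
  have hD : zpowers c ⊔ (zpowers a ⊓ zpowers b) = zpowers a ⊔ zpowers b := by
    rw [ore_dual hdist, h1, h2, inf_idem]
  -- the closure of {c} ∪ (zpowers a ⊓ zpowers b) is the whole thing
  set T : Set G := {c} ∪ ((zpowers a ⊓ zpowers b : Subgroup G) : Set G) with hT
  have hclos : closure T = zpowers a ⊔ zpowers b := by
    rw [hT, Subgroup.closure_union, ← zpowers_eq_closure, closure_eq, hD]
  have hcommT : ∀ x ∈ T, ∀ y ∈ T, Commute x y := by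
    rintro x (rfl | hx) y (rfl | hy)
    · exact Commute.refl _
    · obtain ⟨⟨i, hi⟩, ⟨j, hj⟩⟩ := hy
      have cxa : Commute y a := by rw [← hi]; exact (Commute.refl a).zpow_left i
      have cxb : Commute y b := by rw [← hj]; exact (Commute.refl b).zpow_left j
      exact ((cxa.mul_right cxb)).symm
    · obtain ⟨⟨i, hi⟩, ⟨j, hj⟩⟩ := hx
      have cxa : Commute x a := by rw [← hi]; exact (Commute.refl a).zpow_left i
      have cxb : Commute x b := by rw [← hj]; exact (Commute.refl b).zpow_left j
      exact (cxa.mul_right cxb)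
    · obtain ⟨⟨i, hi⟩, _⟩ := hx
      obtain ⟨⟨j, hj⟩, _⟩ := hy
      rw [← hi, ← hj]
      exact Commute.zpow_zpow_self a i j
  have key : ∀ x ∈ closure T, ∀ y ∈ closure T, Commute x y := by
    intro x hx y hy
    induction hx, hy using closure_induction₂ with
    | mem x y hx hy => exact hcommT x hx y hy
    | one_left x hx => exact Commute.one_left x
    | one_right x hx => exact Commute.one_right x
    | mul_left x y z hx hy hz h1 h2 => exact h1.mul_left h2
    | mul_right y z x hy hz hx h1 h2 => exact h1.mul_right h2
    | inv_left x y hx hy h => exact h.inv_left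
    | inv_right x y hx hy h => exact h.inv_right
  have haD : a ∈ closure T := by
    rw [hclos]; exact le_sup_left (b := zpowers b) (mem_zpowers a)
  have hbD : b ∈ closure T := by
    rw [hclos]; exact le_sup_right (a := zpowers a) (mem_zpowers b)
  exact key a haD b hbD

end GroupPart

section CommPart

variable {G : Type*} [CommGroup G]

theorem ore_zpow_eq_one {a : G} (ha : orderOf a = 0) {k : ℤ} (h : a ^ k = 1) : k = 0 := by
  have := orderOf_dvd_iff_zpow_eq_one.mpr h
  rw [ha] at this
  exact_mod_cast zero_dvd_iff.mp (by exact_mod_cast this)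

theorem ore_sub_aux {x h : G} {i k : ℤ} {v : G} (hi : x ^ i = v) (hk : (x * h) ^ k = v) :
    h ^ k = x ^ (i - k) := by
  have h1 : x ^ k * h ^ k = x ^ i := by rw [← mul_zpow, hk, hi]
  rw [zpow_sub, ← h1, mul_comm (x ^ k) (h ^ k), mul_assoc,
    mul_inv_cancel, mul_one]

theorem ore_prime (hdist : ∀ H K L : Subgroup G, H ⊓ (K ⊔ L) = (H ⊓ K) ⊔ (H ⊓ L))
    {p : ℕ} (hp : p.Prime) {x h : G} (hx : orderOf x = p) (hh : orderOf h = p) :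
    x ∈ zpowers h := by
  have hxp : x ^ (p : ℤ) = 1 := by
    rw [zpow_natCast, ← hx]; exact pow_orderOf_eq_one x
  by_cases hw : ∃ w : G, w ∈ zpowers x ⊓ zpowers h ∧ w ≠ 1
  · obtain ⟨w, hwmem, hw1⟩ := hw
    obtain ⟨hwx, hwh⟩ := Subgroup.mem_inf.mp hwmem
    obtain ⟨i, hi⟩ := mem_zpowers_iff.mp hwx
    have hpi : ¬ ((p : ℤ) ∣ i) := by
      intro hdvd
      apply hw1
      rw [← hi]
      rw [← hx] at hdvd
      exact orderOf_dvd_iff_zpow_eq_one.mp (by exact_mod_cast hdvd)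
    have hco : IsCoprime i (p : ℤ) := by
      rw [Int.isCoprime_iff_gcd_eq_one]
      have h2 : ¬ (p ∣ i.natAbs) := fun hd => hpi (Int.natCast_dvd.mpr hd)
      have h3 := (Nat.Prime.coprime_iff_not_dvd hp).mpr h2
      simpa [Int.gcd] using Nat.coprime_comm.mp h3
    obtain ⟨u, v, huv⟩ := hco
    have huv' : i * u + (p:ℤ) * v = 1 := by linarith
    have : x = w ^ u := by
      calc x = x ^ (i * u + (p:ℤ) * v) := by rw [huv']; simp
        _ = (x ^ i) ^ u * (x ^ (p:ℤ)) ^ v := by rw [zpow_add, zpow_mul, zpow_mul]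
        _ = w ^ u := by rw [hxp, hi]; simp
    rw [this]
    exact zpow_mem hwh u
  · push_neg at hw
    exfalso
    have hx1 : x ≠ 1 := by
      intro h1
      rw [h1, orderOf_one] at hx
      exact hp.one_lt.ne' hx.symm
    have hmem : x ∈ zpowers x ⊓ (zpowers h ⊔ zpowers (x * h)) := by
      refine ⟨mem_zpowers x, ?_⟩
      have h4 : (x * h) * h⁻¹ ∈ zpowers h ⊔ zpowers (x * h) :=
        mul_mem (mem_sup_right (mem_zpowers (x*h))) (inv_mem (mem_sup_left (mem_zpowers h)))
      simpa using h4
    rw [hdist] at hmem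
    obtain ⟨u, hu, v, hv, huv⟩ := Subgroup.mem_sup.mp hmem
    have hu1 : u = 1 := hw u hu
    obtain ⟨hvx, hvxh⟩ := Subgroup.mem_inf.mp hv
    obtain ⟨i, hi⟩ := mem_zpowers_iff.mp hvx
    obtain ⟨k, hk⟩ := mem_zpowers_iff.mp hvxh
    have hhk : h ^ k = x ^ (i - k) := ore_sub_aux hi hk
    have hhk1 : h ^ k = 1 := hw _ ⟨mem_zpowers_iff.mpr ⟨i - k, hhk.symm⟩,
      mem_zpowers_iff.mpr ⟨k, rfl⟩⟩
    have hpk : (p : ℤ) ∣ k := by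
      rw [← hh]
      exact_mod_cast orderOf_dvd_iff_zpow_eq_one.mpr hhk1
    have hxk : x ^ k = 1 := by
      rw [← orderOf_dvd_iff_zpow_eq_one, hx]
      exact hpk
    have hv1 : v = 1 := by rw [← hk, mul_zpow, hhk1, hxk, one_mul]
    exact hx1 (by rw [← huv, hu1, hv1, one_mul])

theorem ore_mixed (hdist : ∀ H K L : Subgroup G, H ⊓ (K ⊔ L) = (H ⊓ K) ⊔ (H ⊓ L))
    {a z : G} (ha : orderOf a = 0) {q : ℕ} (hq : q.Prime) (hz : orderOf z = q) : False := by
  have hzq : z ^ (q : ℤ) = 1 := by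
    rw [zpow_natCast, ← hz]; exact pow_orderOf_eq_one z
  have claim1 : ∀ w ∈ zpowers a ⊓ zpowers z, w = 1 := by
    intro w hwmem
    obtain ⟨hwa, hwz⟩ := Subgroup.mem_inf.mp hwmem
    obtain ⟨i, hi⟩ := mem_zpowers_iff.mp hwa
    obtain ⟨j, hj⟩ := mem_zpowers_iff.mp hwz
    have h5 : a ^ (i * q) = 1 := by
      rw [zpow_mul, hi, ← hj, ← zpow_mul, mul_comm j (q:ℤ), zpow_mul, hzq, one_zpow]
    have hi0 : i = 0 := by
      have h6 := ore_zpow_eq_one ha h5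
      rcases mul_eq_zero.mp h6 with h | h
      · exact h
      · exact absurd h (by exact_mod_cast hq.ne_zero)
    rw [← hi, hi0, zpow_zero]
  have hmem : a ∈ zpowers a ⊓ (zpowers z ⊔ zpowers (a * z)) := by
    refine ⟨mem_zpowers a, ?_⟩
    have h4 : (a * z) * z⁻¹ ∈ zpowers z ⊔ zpowers (a * z) :=
      mul_mem (mem_sup_right (mem_zpowers (a*z))) (inv_mem (mem_sup_left (mem_zpowers z)))
    simpa using h4
  rw [hdist] at hmem
  obtain ⟨u, hu, v, hv, huv⟩ := Subgroup.mem_sup.mp hmem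
  have hu1 : u = 1 := claim1 u hu
  obtain ⟨hva, hvaz⟩ := Subgroup.mem_inf.mp hv
  obtain ⟨i, hi⟩ := mem_zpowers_iff.mp hva
  obtain ⟨k, hk⟩ := mem_zpowers_iff.mp hvaz
  have hzk : z ^ k = a ^ (i - k) := ore_sub_aux hi hk
  have hzk1 : z ^ k = 1 := claim1 _ ⟨mem_zpowers_iff.mpr ⟨i - k, hzk.symm⟩,
    mem_zpowers_iff.mpr ⟨k, rfl⟩⟩
  have hik : i = k := by
    have h7 : a ^ (i - k) = 1 := by rw [← hzk, hzk1]
    have := ore_zpow_eq_one ha h7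
    omega
  have hqk : (q : ℤ) ∣ k := by
    rw [← hz]
    exact_mod_cast orderOf_dvd_iff_zpow_eq_one.mpr hzk1
  obtain ⟨s, hs⟩ := hqk
  have hav : a = a ^ ((q:ℤ) * s) := by
    rw [← hs, ← hik, hi, ← huv, hu1, one_mul]
  have h8 : a ^ ((q:ℤ) * s - 1) = 1 := by
    rw [zpow_sub, ← hav, zpow_one]
    simp
  have h9 := ore_zpow_eq_one ha h8
  have h10 : (q : ℤ) * s = 1 := by omega
  have h11 : (q : ℤ) ∣ 1 := ⟨s, h10.symm⟩
  have h12 : q ∣ 1 := by exact_mod_cast h11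
  exact hq.one_lt.ne' (Nat.eq_one_of_dvd_one h12)

theorem ore_pair_inf (hdist : ∀ H K L : Subgroup G, H ⊓ (K ⊔ L) = (H ⊓ K) ⊔ (H ⊓ L))
    {a b : G} (ha : orderOf a = 0) : ∃ c : G, closure {a, b} = zpowers c := by
  have TF : ∀ x : G, ∀ n : ℤ, n ≠ 0 → x ^ n = 1 → x = 1 := by
    intro x n hn hxn
    by_contra hx1
    have hfin : IsOfFinOrder x := by
      rw [isOfFinOrder_iff_pow_eq_one]
      refine ⟨n.natAbs, by omega, ?_⟩
      rcases Int.natAbs_eq n with h | h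
      · rw [← zpow_natCast, ← h, hxn]
      · rw [← zpow_natCast, ← neg_neg ((n.natAbs : ℤ)), ← h, zpow_neg, hxn, inv_one]
    have ho : orderOf x ≠ 0 := hfin.orderOf_pos.ne'
    have ho1 : orderOf x ≠ 1 := fun h => hx1 (orderOf_eq_one_iff.mp h)
    have hq := Nat.minFac_prime ho1
    have hz : orderOf (x ^ (orderOf x / (orderOf x).minFac)) = (orderOf x).minFac :=
      orderOf_pow_orderOf_div ho (Nat.minFac_dvd _)
    exact ore_mixed hdist ha hq hz
  have hrel : ∃ m n : ℤ, n ≠ 0 ∧ b ^ n = a ^ m := by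
    have hmem : a ∈ zpowers a ⊓ (zpowers b ⊔ zpowers (a * b)) := by
      refine ⟨mem_zpowers a, ?_⟩
      have h4 : (a * b) * b⁻¹ ∈ zpowers b ⊔ zpowers (a * b) :=
        mul_mem (mem_sup_right (mem_zpowers (a*b))) (inv_mem (mem_sup_left (mem_zpowers b)))
      simpa using h4
    rw [hdist] at hmem
    obtain ⟨u, hu, v, hv, huv⟩ := Subgroup.mem_sup.mp hmem
    obtain ⟨j, hj⟩ := mem_zpowers_iff.mp (Subgroup.mem_inf.mp hu).2
    obtain ⟨i2, hi2⟩ := mem_zpowers_iff.mp (Subgroup.mem_inf.mp hv).1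
    obtain ⟨k, hk⟩ := mem_zpowers_iff.mp (Subgroup.mem_inf.mp hv).2
    by_cases hk0 : k = 0
    · have hv1 : v = 1 := by rw [← hk, hk0, zpow_zero]
      have hab : b ^ j = a := by rw [hj, ← huv, hv1, mul_one]
      have hj0 : j ≠ 0 := by
        intro h
        rw [h, zpow_zero] at hab
        rw [← hab, orderOf_one] at ha
        exact one_ne_zero ha
      exact ⟨1, j, hj0, by rw [hab, zpow_one]⟩
    · exact ⟨i2 - k, k, hk0, ore_sub_aux hi2 hk⟩
  obtain ⟨m, n, hn, hrel⟩ := hrel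
  have hd0 : (Int.gcd n m : ℤ) ≠ 0 := by
    intro h
    have : Int.gcd n m = 0 := by exact_mod_cast h
    exact hn (Int.gcd_eq_zero_iff.mp this).1
  have hbez : (Int.gcd n m : ℤ) = n * Int.gcdA n m + m * Int.gcdB n m := Int.gcd_eq_gcd_ab n m
  set E := Int.gcdA n m with hE
  set F := Int.gcdB n m with hF
  set c := a ^ E * b ^ F with hc
  have hcn : c ^ n = a ^ (Int.gcd n m : ℤ) := by
    have hstep : (a ^ E * b ^ F) ^ n = (a ^ E) ^ n * (b ^ n) ^ F := by
      rw [mul_zpow]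
      congr 1
      rw [← zpow_mul, ← zpow_mul, mul_comm]
    rw [hc, hstep, hrel, ← zpow_mul, ← zpow_mul, ← zpow_add]
    congr 1
    rw [hbez]
    ring
  obtain ⟨n', hn'⟩ := (Int.gcd_dvd_left n m : (Int.gcd n m : ℤ) ∣ n)
  obtain ⟨m', hm'⟩ := (Int.gcd_dvd_right n m : (Int.gcd n m : ℤ) ∣ m)
  have hac : a = c ^ n' := by
    have h1 : (a * (c ^ n')⁻¹) ^ n = 1 := by
      rw [mul_zpow, inv_zpow, ← zpow_mul, mul_comm n' n, zpow_mul, hcn, ← zpow_mul, ← hn']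
      simp
    have h2 := TF _ n hn h1
    rwa [mul_inv_eq_one] at h2
  have hbc : b = c ^ m' := by
    have h1 : (b * (c ^ m')⁻¹) ^ n = 1 := by
      rw [mul_zpow, inv_zpow, ← zpow_mul, mul_comm m' n, zpow_mul, hcn, ← zpow_mul, ← hm', hrel]
      simp
    have h2 := TF _ n hn h1
    rwa [mul_inv_eq_one] at h2
  refine ⟨c, le_antisymm ?_ ?_⟩
  · rw [closure_le]
    intro x hx
    simp only [Set.mem_insert_iff, Set.mem_singleton_iff] at hx
    rcases hx with rfl | rfl
    · exact mem_zpowers_iff.mpr ⟨n', hac.symm⟩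
    · exact mem_zpowers_iff.mpr ⟨m', hbc.symm⟩
  · rw [zpowers_le, hc]
    exact mul_mem (zpow_mem (subset_closure (by simp)) E) (zpow_mem (subset_closure (by simp)) F)

theorem ore_pair_fin (hdist : ∀ H K L : Subgroup G, H ⊓ (K ⊔ L) = (H ⊓ K) ⊔ (H ⊓ L))
    {a b : G} (ha : orderOf a ≠ 0) (hb : orderOf b ≠ 0) :
    ∃ c : G, closure {a, b} = zpowers c := by
  set H' : Subgroup G := zpowers a ⊔ zpowers b with hH'
  have hfin : Finite ↥H' := by
    have hsub : (H' : Set G) ⊆ Set.range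
        (fun p : Fin (orderOf a) × Fin (orderOf b) => a ^ (p.1 : ℕ) * b ^ (p.2 : ℕ)) := by
      intro x hx
      rw [SetLike.mem_coe] at hx
      obtain ⟨u, hu, v, hv, huv⟩ := Subgroup.mem_sup.mp hx
      obtain ⟨i, hi⟩ := mem_zpowers_iff.mp hu
      obtain ⟨j, hj⟩ := mem_zpowers_iff.mp hv
      have hA : 0 < ((orderOf a : ℕ) : ℤ) := by exact_mod_cast Nat.pos_of_ne_zero ha
      have hB : 0 < ((orderOf b : ℕ) : ℤ) := by exact_mod_cast Nat.pos_of_ne_zero hb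
      have hiA := Int.emod_nonneg i (ne_of_gt hA)
      have hiA' := Int.emod_lt_of_pos i hA
      have hjB := Int.emod_nonneg j (ne_of_gt hB)
      have hjB' := Int.emod_lt_of_pos j hB
      have har : a ^ ((i % (orderOf a : ℤ)).toNat : ℕ) = a ^ i := by
        rw [← zpow_natCast, Int.toNat_of_nonneg hiA, zpow_mod_orderOf]
      have hbr : b ^ ((j % (orderOf b : ℤ)).toNat : ℕ) = b ^ j := by
        rw [← zpow_natCast, Int.toNat_of_nonneg hjB, zpow_mod_orderOf]
      refine ⟨(⟨(i % (orderOf a : ℤ)).toNat, by omega⟩, ⟨(j % (orderOf b : ℤ)).toNat, by omega⟩), ?_⟩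
      simp only []
      rw [har, hbr, hi, hj, huv]
    exact Set.Finite.to_subtype ((Set.finite_range _).subset hsub)
  have hee : Monoid.ExponentExists ↥H' := Monoid.ExponentExists.of_finite
  obtain ⟨g₀, hg₀⟩ := Monoid.exists_orderOf_eq_exponent hee
  set g : G := (g₀ : G) with hg
  have hcoe : ∀ (y : ↥H'), orderOf (y : G) = orderOf y := fun y =>
    orderOf_injective H'.subtype H'.subtype_injective y
  have hgord : orderOf g = Monoid.exponent ↥H' := by rw [hg, hcoe g₀, hg₀]
  have hN0 : Monoid.exponent ↥H' ≠ 0 := Monoid.exponent_ne_zero_of_finite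
  have hgN : orderOf g ≠ 0 := by rw [hgord]; exact hN0
  have hdvd : ∀ x ∈ H', orderOf x ∣ orderOf g := by
    intro x hx
    rw [hgord]
    have h2 := Monoid.order_dvd_exponent (⟨x, hx⟩ : ↥H')
    rwa [← hcoe ⟨x, hx⟩] at h2
  have hgmem : g ∈ H' := g₀.2
  set N := orderOf g with hNdef
  have main : ∀ o : ℕ, ∀ x : G, x ∈ H' → orderOf x = o → x ∈ zpowers g := by
    intro o
    induction o using Nat.strong_induction_on with
    | _ o IH =>
      intro x hx hxo
      have hoN : o ∣ N := by rw [← hxo]; exact hdvd x hx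
      have ho0 : o ≠ 0 := by
        rintro rfl
        exact hgN (zero_dvd_iff.mp hoN)
      by_cases ho1 : o = 1
      · rw [ho1, orderOf_eq_one_iff] at hxo
        rw [hxo]
        exact one_mem _
      · set p := o.minFac with hpdef
        have hp : p.Prime := Nat.minFac_prime ho1
        have hpo : p ∣ o := Nat.minFac_dvd o
        have hx0 : orderOf x ≠ 0 := by rw [hxo]; exact ho0
        have hpdvd : p ∣ orderOf x := by rw [hxo]; exact hpo
        have hzord : orderOf (x ^ (o / p)) = p := by
          have := orderOf_pow_orderOf_div hx0 hpdvd
          rwa [hxo] at this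
        have hpN : p ∣ N := hpo.trans hoN
        have hhord : orderOf (g ^ (N / p)) = p := orderOf_pow_orderOf_div hgN hpN
        have hzh := ore_prime hdist hp hzord hhord
        obtain ⟨w, hw⟩ := mem_zpowers_iff.mp hzh
        have hw' : (g ^ ((N / p : ℕ) : ℤ)) ^ w = x ^ ((o / p : ℕ) : ℤ) := by
          rw [zpow_natCast, zpow_natCast]; exact hw
        have hNop : (N / o) * (o / p) = N / p := by
          rw [Nat.div_mul_div_comm hoN hpo, mul_comm N o, Nat.mul_div_mul_left _ _
            (Nat.pos_of_ne_zero ho0)]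
        set t : ℤ := -(w * ((N / o : ℕ) : ℤ)) with htdef
        set y := x * g ^ t with hydef
        have ht : t * ((o / p : ℕ) : ℤ) = -(((N / p : ℕ) : ℤ) * w) := by
          rw [htdef, ← hNop]
          push_cast
          ring
        have hyo : y ^ ((o / p : ℕ) : ℤ) = 1 := by
          rw [hydef, mul_zpow, ← zpow_mul, ht, ← hw', zpow_neg, zpow_mul, mul_inv_cancel]
        have hody : orderOf y ∣ o / p := by
          have := orderOf_dvd_iff_zpow_eq_one.mpr hyo
          exact_mod_cast this
        have hop0 : 0 < o / p := Nat.div_pos (Nat.le_of_dvd (Nat.pos_of_ne_zero ho0) hpo)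
          hp.pos
        have hylt : orderOf y < o :=
          lt_of_le_of_lt (Nat.le_of_dvd hop0 hody)
            (Nat.div_lt_self (Nat.pos_of_ne_zero ho0) hp.one_lt)
        have hymem : y ∈ H' := mul_mem hx (zpow_mem hgmem t)
        have hy := IH (orderOf y) hylt y hymem rfl
        have hxy : x = y * g ^ (-t) := by
          rw [hydef]
          group
        rw [hxy]
        exact mul_mem hy (zpow_mem (mem_zpowers g) (-t))
  refine ⟨g, ?_⟩
  have hab : closure {a, b} = H' := by
    rw [Set.insert_eq, Subgroup.closure_union, ← zpowers_eq_closure, ← zpowers_eq_closure]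
  rw [hab]
  apply le_antisymm
  · refine sup_le (zpowers_le.mpr ?_) (zpowers_le.mpr ?_)
    · exact main (orderOf a) a (mem_sup_left (mem_zpowers a)) rfl
    · exact main (orderOf b) b (mem_sup_right (mem_zpowers b)) rfl
  · exact zpowers_le.mpr hgmem

end CommPart

theorem ore_pair {G : Type*} [CommGroup G]
    (hdist : ∀ H K L : Subgroup G, H ⊓ (K ⊔ L) = (H ⊓ K) ⊔ (H ⊓ L))
    (a b : G) : ∃ c : G, closure {a, b} = zpowers c := by
  by_cases ha : orderOf a = 0
  · exact ore_pair_inf hdist ha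
  · by_cases hb : orderOf b = 0
    · obtain ⟨c, hc⟩ := ore_pair_inf hdist (b := a) hb
      exact ⟨c, by rwa [Set.pair_comm a b]⟩
    · exact ore_pair_fin hdist ha hb

theorem ore_finite {G : Type*} [CommGroup G]
    (hdist : ∀ H K L : Subgroup G, H ⊓ (K ⊔ L) = (H ⊓ K) ⊔ (H ⊓ L))
    {S : Set G} (hS : S.Finite) : ∃ c : G, closure S = zpowers c := by
  refine Set.Finite.induction_on (motive := fun s _ => ∃ c : G, Subgroup.closure s = zpowers c) S hS
    ⟨1, by rw [Subgroup.closure_empty, zpowers_one_eq_bot]⟩ ?_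
  rintro x s hxs hsfin ⟨c, hc⟩
  obtain ⟨c', hc'⟩ := ore_pair hdist x c
  refine ⟨c', ?_⟩
  rw [Set.insert_eq, Subgroup.closure_union, hc, zpowers_eq_closure,
    ← Subgroup.closure_union, ← Set.insert_eq, hc']

theorem isCyclic_zpowers {G : Type*} [Group G] (c : G) : IsCyclic ↥(zpowers c) := by
  refine ⟨⟨⟨c, mem_zpowers c⟩, fun x => ?_⟩⟩
  obtain ⟨k, hk⟩ := mem_zpowers_iff.mp x.2
  refine mem_zpowers_iff.mpr ⟨k, ?_⟩
  ext
  rw [SubgroupClass.coe_zpow]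
  exact hk

/-- Ore's theorem: the subgroup lattice of a group `G` is distributive if and only if `G` is
commutative and locally cyclic (every finitely generated subgroup is cyclic). -/
theorem subgroup_lattice_distributive_iff {G : Type*} [Group G] :
    (∀ H K L : Subgroup G, H ⊓ (K ⊔ L) = (H ⊓ K) ⊔ (H ⊓ L)) ↔
    ((∀ a b : G, a * b = b * a) ∧
      ∀ S : Set G, S.Finite → IsCyclic (Subgroup.closure S)) := by
  constructor
  · intro hdist
    have hcomm := ore_comm hdist
    refine ⟨hcomm, ?_⟩
    letI : CommGroup G := { (inferInstance : Group G) with mul_comm := hcomm }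
    intro S hSfin
    obtain ⟨c, hc⟩ := ore_finite hdist hSfin
    rw [hc]
    exact _root_.isCyclic_zpowers c
  · rintro ⟨hcomm, hcyc⟩ H K L
    letI : CommGroup G := { (inferInstance : Group G) with mul_comm := hcomm }
    apply le_antisymm
    · intro x hx
      obtain ⟨hxH, hxKL⟩ := Subgroup.mem_inf.mp hx
      obtain ⟨k, hk, l, hl, hkl⟩ := Subgroup.mem_sup.mp hxKL
      have hcy : IsCyclic ↥(closure ({k, l} : Set G)) := hcyc _ (Set.toFinite _)
      obtain ⟨g₀, hg₀⟩ := hcy.exists_generator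
      set c : G := (g₀ : G) with hcdef
      have hkmem : k ∈ closure ({k, l} : Set G) := subset_closure (by simp)
      have hlmem : l ∈ closure ({k, l} : Set G) := subset_closure (by simp)
      obtain ⟨A, hA⟩ := mem_zpowers_iff.mp (hg₀ ⟨k, hkmem⟩)
      obtain ⟨B, hB⟩ := mem_zpowers_iff.mp (hg₀ ⟨l, hlmem⟩)
      have hkc : c ^ A = k := by
        have := congrArg (Subtype.val) hA
        rwa [SubgroupClass.coe_zpow] at this
      have hlc : c ^ B = l := by
        have := congrArg (Subtype.val) hB
        rwa [SubgroupClass.coe_zpow] at this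
      have hxc : x = c ^ (A + B) := by
        rw [zpow_add, hkc, hlc, hkl]
      by_cases hAB : A = 0 ∧ B = 0
      · have : x = 1 := by rw [hxc, hAB.1, hAB.2, add_zero, zpow_zero]
        rw [this]
        exact one_mem _
      · have hd0 : ((Int.gcd A B : ℕ) : ℤ) ≠ 0 := by
          intro h
          have h' : Int.gcd A B = 0 := by exact_mod_cast h
          exact hAB ⟨(Int.gcd_eq_zero_iff.mp h').1, (Int.gcd_eq_zero_iff.mp h').2⟩
        set d : ℤ := (Int.gcd A B : ℤ) with hddef
        have hbez : d = A * Int.gcdA A B + B * Int.gcdB A B := Int.gcd_eq_gcd_ab A B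
        set r := Int.gcdA A B with hr
        set s := Int.gcdB A B with hs
        obtain ⟨a', ha'⟩ := (Int.gcd_dvd_left A B : d ∣ A)
        obtain ⟨b', hb'⟩ := (Int.gcd_dvd_right A B : d ∣ B)
        have habs : a' * r + b' * s = 1 := by
          apply mul_left_cancel₀ hd0
          rw [mul_one]
          linear_combination (-1 : ℤ) * hbez + (-r) * ha' + (-s) * hb'
        -- x ^ (a' * r) ∈ K and x ^ (b' * s) ∈ L
        have hxm : x ^ (a' * r) = k ^ ((a' + b') * r) := by
          rw [hxc, ← hkc, ← zpow_mul, ← zpow_mul]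
          congr 1
          linear_combination a' * r * hb' - b' * r * ha'
        have hxn : x ^ (b' * s) = l ^ ((a' + b') * s) := by
          rw [hxc, ← hlc, ← zpow_mul, ← zpow_mul]
          congr 1
          linear_combination b' * s * ha' - a' * s * hb'
        have hx1 : x = x ^ (a' * r) * x ^ (b' * s) := by
          rw [← zpow_add, habs, zpow_one]
        rw [hx1]
        refine mul_mem (mem_sup_left ?_) (mem_sup_right ?_)
        · exact Subgroup.mem_inf.mpr ⟨zpow_mem hxH _, by rw [hxm]; exact zpow_mem hk _⟩
        · exact Subgroup.mem_inf.mpr ⟨zpow_mem hxH _, by rw [hxn]; exact zpow_mem hl _⟩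
    · exact sup_le (inf_le_inf_left H le_sup_left) (inf_le_inf_left H le_sup_right)
end

section
/- Let C be a groupoid and let S be a set of morphisms of C (a subset of the sigma type Σ (x y : C), x ⟶ y). Then the following are equivalent: (i) S is closed under inverses (if ⟨x, y, f⟩ ∈ S then ⟨y, x, f⁻¹⟩ ∈ S) and S equals its relational square, i.e. S = { ⟨x, z, f ≫ g⟩ | ⟨x, y, f⟩ ∈ S and ⟨y, z, g⟩ ∈ S }; (ii) there exists a subgroupoid B of C (a family of sets of arrows closed under composition and inverses) such that S = { ⟨x, y, f⟩ | f ∈ B.arrows x y }. -/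
open CategoryTheory

/-- A set `S` of morphisms of a groupoid `C` is closed under inverses and equal to its
relational square (i.e. `S` is a projection of the induced Frobenius algebra in `Rel`)
if and only if `S` is the set of arrows of a subgroupoid of `C`. -/
theorem projection_iff_subgroupoid {C : Type*} [Groupoid C]
    (S : Set (Σ (x y : C), x ⟶ y)) :
    ((∀ (x y : C) (f : x ⟶ y),
        (⟨x, y, f⟩ : Σ (x y : C), x ⟶ y) ∈ S → (⟨y, x, Groupoid.inv f⟩ : Σ (x y : C), x ⟶ y) ∈ S) ∧
      S = {t : Σ (x y : C), x ⟶ y |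
        ∃ (x y z : C) (f : x ⟶ y) (g : y ⟶ z),
          (⟨x, y, f⟩ : Σ (x y : C), x ⟶ y) ∈ S ∧ (⟨y, z, g⟩ : Σ (x y : C), x ⟶ y) ∈ S ∧
            t = ⟨x, z, f ≫ g⟩}) ↔
    (∃ B : Subgroupoid C, S = {t : Σ (x y : C), x ⟶ y | t.2.2 ∈ B.arrows t.1 t.2.1}) := by
  constructor
  · rintro ⟨hinv, hsq⟩
    refine ⟨⟨fun x y => {f | (⟨x, y, f⟩ : Σ (x y : C), x ⟶ y) ∈ S},
      fun {c d p} hp => hinv c d p hp, fun {c d e p} hp {q} hq => ?_⟩, ?_⟩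
    · show (⟨c, e, p ≫ q⟩ : Σ (x y : C), x ⟶ y) ∈ S
      rw [hsq]
      exact ⟨c, d, e, p, q, hp, hq, rfl⟩
    · ext ⟨x, y, f⟩; rfl
  · rintro ⟨B, rfl⟩
    refine ⟨fun x y f hf => B.inv hf, ?_⟩
    ext ⟨x, y, f⟩
    constructor
    · intro hf
      exact ⟨x, y, y, f, Groupoid.inv f ≫ f, hf, B.mul (B.inv hf) hf, by simp⟩
    · rintro ⟨a, b, c, p, q, hp, hq, h⟩
      obtain ⟨rfl, h⟩ := Sigma.mk.inj_iff.mp h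
      rw [heq_eq_eq] at h
      obtain ⟨rfl, h⟩ := Sigma.mk.inj_iff.mp h
      rw [heq_eq_eq] at h
      subst h
      exact B.mul hp hq
end

section
/- Let C be the groupoid whose objects are the two elements of Bool and which has exactly one morphism between any ordered pair of objects (the indiscrete groupoid on a two-element set). Then: (i) the lattice of subgroupoids of C is distributive, i.e. A ⊓ (B ⊔ D) = (A ⊓ B) ⊔ (A ⊓ D) for all subgroupoids A, B, D; and (ii) C is not commutative as an algebra in Rel: there exist objects x ≠ y and morphisms f : x ⟶ y, g : y ⟶ x such that the composites f ≫ g and g ≫ f are distinct elements of the sigma type Σ (a b : C), a ⟶ b (they are endomorphisms of different objects). -/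
open CategoryTheory

/-- The indiscrete groupoid on a type: exactly one morphism between any two objects. -/
def Indiscrete (α : Type*) : Type _ := α

instance {α : Type*} : Groupoid (Indiscrete α) where
  Hom _ _ := Unit
  id _ := ⟨⟩
  comp _ _ := ⟨⟩
  inv _ := ⟨⟩

private lemma unit_mem {s : Set Unit} {f : Unit} (g : Unit) (h : f ∈ s) : g ∈ s := by
  cases f; cases g; exact h

/-- The union of two subgroupoids of the indiscrete groupoid on `Bool` is a subgroupoid. -/
def usup (B D : Subgroupoid (Indiscrete Bool)) : Subgroupoid (Indiscrete Bool) where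
  arrows c d := B.arrows c d ∪ D.arrows c d
  inv h := h.elim (fun h => Or.inl (B.inv h)) (fun h => Or.inr (D.inv h))
  mul {a b c} {f} hf {g} hg := by
    rcases hf with hf | hf <;> rcases hg with hg | hg
    · exact Or.inl (B.mul hf hg)
    · by_cases hab : a = b
      · subst hab; exact Or.inr (unit_mem _ hg)
      · by_cases hbc : b = c
        · subst hbc; exact Or.inl (unit_mem _ hf)
        · have hac : a = c := by revert hab hbc; cases a <;> cases b <;> cases c <;> (intro h1 h2; first | rfl | exact absurd rfl h1 | exact absurd rfl h2)
          subst hac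
          exact Or.inl (unit_mem _ (B.mul hf (B.inv hf)))
    · by_cases hab : a = b
      · subst hab; exact Or.inl (unit_mem _ hg)
      · by_cases hbc : b = c
        · subst hbc; exact Or.inr (unit_mem _ hf)
        · have hac : a = c := by revert hab hbc; cases a <;> cases b <;> cases c <;> (intro h1 h2; first | rfl | exact absurd rfl h1 | exact absurd rfl h2)
          subst hac
          exact Or.inr (unit_mem _ (D.mul hf (D.inv hf)))
    · exact Or.inr (D.mul hf hg)

lemma sup_eq_usup (B D : Subgroupoid (Indiscrete Bool)) : B ⊔ D = usup B D := by
  apply le_antisymm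
  · exact sup_le ((Subgroupoid.le_iff _ _).mpr fun {c d} f hf => Or.inl hf)
      ((Subgroupoid.le_iff _ _).mpr fun {c d} f hf => Or.inr hf)
  · rw [Subgroupoid.le_iff]
    intro c d f hf
    exact hf.elim (fun h => (Subgroupoid.le_iff _ _).mp le_sup_left h)
      (fun h => (Subgroupoid.le_iff _ _).mp le_sup_right h)

/-- For the indiscrete groupoid `C` on the two-element set `Bool`, the lattice of
subgroupoids of `C` is distributive, yet `C` is noncommutative as an algebra in `Rel`:
there are morphisms `f : x ⟶ y`, `g : y ⟶ x` with `x ≠ y` whose two composites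
`f ≫ g` and `g ≫ f` are distinct elements of the type of morphisms of `C`. -/
theorem indiscrete_bool_distributive_not_commutative :
    (∀ A B D : Subgroupoid (Indiscrete Bool), A ⊓ (B ⊔ D) = (A ⊓ B) ⊔ (A ⊓ D)) ∧
    (∃ (x y : Indiscrete Bool) (f : x ⟶ y) (g : y ⟶ x), x ≠ y ∧
      (⟨x, x, f ≫ g⟩ : Σ (a b : Indiscrete Bool), a ⟶ b) ≠ ⟨y, y, g ≫ f⟩) := by
  constructor
  · intro A B D
    rw [sup_eq_usup, sup_eq_usup]
    ext c d f
    show f ∈ A.arrows c d ∩ (B.arrows c d ∪ D.arrows c d) ↔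
      f ∈ A.arrows c d ∩ B.arrows c d ∪ A.arrows c d ∩ D.arrows c d
    rw [Set.inter_union_distrib_left]
  · refine ⟨false, true, ⟨⟩, ⟨⟩, fun h => Bool.noConfusion h, fun h => ?_⟩
    have : (false : Bool) = true := congrArg (fun p => p.1) h
    exact Bool.noConfusion this
end
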